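/- Let P be a positive integer and r a real with 0 < r < 1. Then √P − 1 ≤ (−r + √(r² + 4P))/2 < √P, and consequently ⌊(−r + √(r² + 4P))/2⌋ ≤ ⌈√P − 1⌉. -/
import Mathlib


/-- The maximum number of wasted retries is ⌈√P − 1⌉, bounding
(−r + √(r² + 4P))/2 between √P − 1 and √P. -/
theorem wasted_retries_sqrt_bound
    (P : ℕ) (hP : 0 < P) (r : ℝ) (hr0 : 0 < r) (hr1 : r < 1) :
    Real.sqrt P - 1 ≤ (-r + Real.sqrt (r ^ 2 + 4 * P)) / 2 ∧
    (-r + Real.sqrt (r ^ 2 + 4 * P)) / 2 < Real.sqrt P ∧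
    ⌊(-r + Real.sqrt (r ^ 2 + 4 * P)) / 2⌋ ≤ ⌈Real.sqrt P - 1⌉ := by
  have hPpos : (0:ℝ) < P := by exact_mod_cast hP
  have hP1 : (1:ℝ) ≤ P := by exact_mod_cast hP
  have hs : Real.sqrt P * Real.sqrt P = P := Real.mul_self_sqrt hPpos.le
  have hs1 : (1:ℝ) ≤ Real.sqrt P := by
    rw [show (1:ℝ) = Real.sqrt 1 by simp]
    exact Real.sqrt_le_sqrt hP1
  have hspos : (0:ℝ) < Real.sqrt P := by linarith
  -- lower bound: sqrt(r^2+4P) ≥ 2√P - 2 + r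
  have hlow : 2 * Real.sqrt P - 2 + r ≤ Real.sqrt (r ^ 2 + 4 * P) := by
    have h1 : (2 * Real.sqrt P - 2 + r) ^ 2 ≤ r ^ 2 + 4 * P := by
      have key : Real.sqrt P * (r - 2) ≤ r - 2 := by nlinarith
      nlinarith
    nlinarith [Real.sq_sqrt (by positivity : (0:ℝ) ≤ r ^ 2 + 4 * P),
      Real.sqrt_nonneg (r ^ 2 + 4 * P), Real.sqrt_nonneg P]
  -- upper bound: sqrt(r^2+4P) < r + 2√P
  have hup : Real.sqrt (r ^ 2 + 4 * P) < r + 2 * Real.sqrt P := by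
    have h2 : r ^ 2 + 4 * P < (r + 2 * Real.sqrt P) ^ 2 := by nlinarith
    have := Real.sqrt_lt_sqrt (by positivity) h2
    rwa [Real.sqrt_sq (by positivity)] at this
  refine ⟨by linarith, by linarith, ?_⟩
  have h3 : (-r + Real.sqrt (r ^ 2 + 4 * P)) / 2 < Real.sqrt P := by linarith
  have h4 : Real.sqrt P - 1 ≤ (⌈Real.sqrt P - 1⌉ : ℝ) := Int.le_ceil _
  have : (⌊(-r + Real.sqrt (r ^ 2 + 4 * P)) / 2⌋ : ℝ) < (⌈Real.sqrt P - 1⌉ : ℝ) + 1 := by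
    have := Int.floor_le ((-r + Real.sqrt (r ^ 2 + 4 * P)) / 2)
    linarith
  exact_mod_cast Int.lt_add_one_iff.mp (by exact_mod_cast this)
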